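/- Entropy non-decrease under Lüders measurement: for a complete family of mutually orthogonal projections (P_n) and any density matrix ρ on a finite-dimensional Hilbert space, S(ρ) ≤ S(∑_n P_n ρ P_n). -/

import Mathlib

open Matrix
open scoped ComplexOrder

/-- Von Neumann entropy of a matrix: `-∑ λᵢ log λᵢ` over the eigenvalues if the
matrix is Hermitian (junk value `0` otherwise). -/
noncomputable def vnEntropy {d : Type*} [Fintype d] [DecidableEq d]
    (A : Matrix d d ℂ) : ℝ :=
  if h : A.IsHermitian then -∑ i, h.eigenvalues i * Real.log (h.eigenvalues i) else 0

noncomputable def shannonEntropy {I : Type*} [Fintype I] (p : I → ℝ) : ℝ :=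
  -∑ i, p i * Real.log (p i)

theorem lueders_entropy_nondecrease {N d : Type*} [Fintype N] [Fintype d] [DecidableEq d]
    (P : N → Matrix d d ℂ)
    (hPh : ∀ n, (P n).IsHermitian) (hPi : ∀ n, P n * P n = P n)
    (hPo : ∀ n m, n ≠ m → P n * P m = 0) (hPsum : ∑ n, P n = 1)
    (ρ : Matrix d d ℂ) (hρ : ρ.PosSemidef) (htr : ρ.trace = 1) :
    vnEntropy ρ ≤ vnEntropy (∑ n, P n * ρ * P n) := by
  classical
  set ρ' : Matrix d d ℂ := ∑ n, P n * ρ * P n with hρ'def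
  have hterm : ∀ n, (P n * ρ * P n).PosSemidef := fun n => by
    have := hρ.mul_mul_conjTranspose_same (P n)
    rwa [(hPh n).eq] at this
  have hρ'psd : ρ'.PosSemidef := by
    rw [hρ'def]
    exact Finset.sum_induction _ _ (fun a b ha hb => ha.add hb) .zero (fun n _ => hterm n)
  have hH : ρ.IsHermitian := hρ.1
  have hH' : ρ'.IsHermitian := hρ'psd.1
  set U : Matrix d d ℂ := (hH.eigenvectorUnitary : Matrix d d ℂ) with hU
  set V : Matrix d d ℂ := (hH'.eigenvectorUnitary : Matrix d d ℂ) with hV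
  set lam : d → ℝ := hH.eigenvalues with hlam
  set mu : d → ℝ := hH'.eigenvalues with hmu
  have hUU : U * star U = 1 := mem_unitaryGroup_iff.mp hH.eigenvectorUnitary.2
  have hVV : V * star V = 1 := mem_unitaryGroup_iff.mp hH'.eigenvectorUnitary.2
  have hVV' : star V * V = 1 := mem_unitaryGroup_iff'.mp hH'.eigenvectorUnitary.2
  -- helper cancellation lemmas
  have hUsU : ∀ X : Matrix d d ℂ, U * (star U * X) = X := fun X => by
    rw [← Matrix.mul_assoc, hUU, Matrix.one_mul]
  have hVsV : ∀ X : Matrix d d ℂ, V * (star V * X) = X := fun X => by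
    rw [← Matrix.mul_assoc, hVV, Matrix.one_mul]
  have hPP : ∀ n (X : Matrix d d ℂ), P n * (P n * X) = P n * X := fun n X => by
    rw [← Matrix.mul_assoc, hPi]
  set M : N → Matrix d d ℂ := fun n => star V * P n * U with hM
  have hPstar : ∀ n, star (P n) = P n := fun n => (hPh n).eq
  have hMH : ∀ n, (M n)ᴴ = star U * P n * V := fun n => by
    simp only [hM, ← star_eq_conjTranspose, Matrix.star_mul, star_star, hPstar n, Matrix.mul_assoc]
  set B : d → d → ℝ := fun j i => ∑ n, Complex.normSq (M n j i) with hB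
  have hBnn : ∀ j i, 0 ≤ B j i := fun j i =>
    Finset.sum_nonneg fun n _ => Complex.normSq_nonneg _
  -- matrix identity 1 : ∑ n, M n * (M n)ᴴ = 1
  have key1 : ∑ n, M n * (M n)ᴴ = 1 := by
    have h : ∀ n, M n * (M n)ᴴ = star V * (P n * V) := by
      intro n
      rw [hMH n, hM]
      simp only [Matrix.mul_assoc]
      rw [hUsU, hPP]
    rw [Finset.sum_congr rfl fun n _ => h n, ← Finset.mul_sum, ← Finset.sum_mul, hPsum,
      Matrix.one_mul, hVV']
  -- matrix identity 2 : ∑ n, (M n)ᴴ * M n = 1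
  have key2 : ∑ n, (M n)ᴴ * M n = 1 := by
    have hUU' : star U * U = 1 := mem_unitaryGroup_iff'.mp hH.eigenvectorUnitary.2
    have h : ∀ n, (M n)ᴴ * M n = star U * (P n * U) := by
      intro n
      rw [hMH n, hM]
      simp only [Matrix.mul_assoc]
      rw [hVsV, hPP]
    rw [Finset.sum_congr rfl fun n _ => h n, ← Finset.mul_sum, ← Finset.sum_mul, hPsum,
      Matrix.one_mul, hUU']
  -- matrix identity 3 : diagonalization of ρ'
  have key3 : diagonal ((fun r : ℝ => (r : ℂ)) ∘ mu)
      = ∑ n, M n * diagonal ((fun r : ℝ => (r : ℂ)) ∘ lam) * (M n)ᴴ := by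
    have h : ∀ n, M n * diagonal ((fun r : ℝ => (r : ℂ)) ∘ lam) * (M n)ᴴ
        = star V * ((P n * ρ * P n) * V) := by
      intro n
      rw [hMH n, hM]
      conv_rhs => rw [hH.spectral_theorem, Unitary.conjStarAlgAut_apply]
      simp only [Matrix.mul_assoc, RCLike.ofReal]
      rfl
    rw [Finset.sum_congr rfl fun n _ => h n, ← Finset.mul_sum, ← Finset.sum_mul, ← hρ'def,
      ← Matrix.mul_assoc]
    have hdiag := hH'.conjStarAlgAut_star_eigenvectorUnitary
    rw [Unitary.conjStarAlgAut_star_apply] at hdiag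
    exact hdiag.symm
  -- row sums of B are 1
  have rowsum : ∀ j, ∑ i, B j i = 1 := by
    intro j
    have h := congr_arg (fun A : Matrix d d ℂ => A j j) key1
    simp only [Matrix.sum_apply, Matrix.mul_apply, conjTranspose_apply, Matrix.one_apply_eq,
      Complex.star_def, Complex.mul_conj] at h
    have : ((∑ i, B j i : ℝ) : ℂ) = 1 := by
      push_cast [hB]
      rw [Finset.sum_comm]
      exact_mod_cast h
    exact_mod_cast this
  -- column sums of B are 1
  have colsum : ∀ i, ∑ j, B j i = 1 := by
    intro i
    have h := congr_arg (fun A : Matrix d d ℂ => A i i) key2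
    simp only [Matrix.sum_apply, Matrix.mul_apply, conjTranspose_apply, Complex.star_def,
      Matrix.one_apply_eq] at h
    have h' : ∀ n j, (starRingEnd ℂ) (M n j i) * M n j i = (Complex.normSq (M n j i) : ℂ) := by
      intro n j
      rw [mul_comm, Complex.mul_conj]
    simp only [h'] at h
    have : ((∑ j, B j i : ℝ) : ℂ) = 1 := by
      push_cast [hB]
      rw [Finset.sum_comm]
      exact_mod_cast h
    exact_mod_cast this
  -- eigenvalues of ρ' are mixtures of eigenvalues of ρ
  have mueq : ∀ j, mu j = ∑ i, B j i * lam i := by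
    intro j
    have h := congr_arg (fun A : Matrix d d ℂ => A j j) key3
    simp only [Matrix.sum_apply, diagonal_apply_eq, Function.comp_apply, Matrix.mul_apply,
      conjTranspose_apply, Complex.star_def, mul_diagonal] at h
    have h2 : ((mu j : ℝ) : ℂ) = ((∑ i, B j i * lam i : ℝ) : ℂ) := by
      rw [h]
      push_cast [hB, Finset.sum_mul]
      rw [Finset.sum_comm]
      refine Finset.sum_congr rfl fun i _ => Finset.sum_congr rfl fun n _ => ?_
      simp only [diagonal_apply, Function.comp_apply, ite_mul, zero_mul, mul_ite, mul_zero,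
        Finset.sum_ite_eq', Finset.mem_univ, if_true]
      rw [mul_right_comm, Complex.mul_conj]
    exact_mod_cast h2
  -- eigenvalues are nonnegative
  have hlamnn : ∀ i, lam i ∈ Set.Ici (0 : ℝ) := fun i => hρ.eigenvalues_nonneg i
  -- Jensen's inequality for each j
  have jensen : ∀ j, ∑ i, B j i * Real.negMulLog (lam i) ≤ Real.negMulLog (mu j) := by
    intro j
    have := Real.concaveOn_negMulLog.le_map_sum (t := Finset.univ) (w := B j) (p := lam)
      (fun i _ => hBnn j i) (rowsum j) (fun i _ => hlamnn i)
    simpa [smul_eq_mul, ← mueq j] using this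
  -- assemble
  have hvnρ : vnEntropy ρ = ∑ i, Real.negMulLog (lam i) := by
    rw [vnEntropy, dif_pos hH]
    simp [Real.negMulLog, neg_mul, ← Finset.sum_neg_distrib]
    rfl
  have hvnρ' : vnEntropy ρ' = ∑ j, Real.negMulLog (mu j) := by
    rw [vnEntropy, dif_pos hH']
    simp [Real.negMulLog, neg_mul, ← Finset.sum_neg_distrib]
    rfl
  rw [hvnρ, hvnρ']
  calc ∑ i, Real.negMulLog (lam i)
      = ∑ i, (∑ j, B j i) * Real.negMulLog (lam i) := by simp [colsum]
    _ = ∑ j, ∑ i, B j i * Real.negMulLog (lam i) := by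
        simp only [Finset.sum_mul]; exact Finset.sum_comm
    _ ≤ ∑ j, Real.negMulLog (mu j) := Finset.sum_le_sum fun j _ => jensen j
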